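/- Let G be a minimal bipartite matching covered graph satisfying |V2| = 2(m − n + 2), and suppose G has exactly two vertices of degree at least 3. Then there exist p ≥ 3 and an isomorphism between G and the graph obtained from the star K_{1,p} by isomorphic leaf matching. Here n is the number of vertices, m the number of edges, and V2 the set of degree-2 vertices of G. -/

import Mathlib

open SimpleGraph

/-- The degree of a vertex `v` in a graph `G`: the number of neighbours of `v`. -/
noncomputable def degN {V : Type*} (G : SimpleGraph V) (v : V) : ℕ :=
  (G.neighborSet v).ncard

/-- A finite simple graph is matching covered if it is connected, has at least 4 vertices,
and every edge lies in some perfect matching. -/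
def MatchingCovered {V : Type*} [Fintype V] (G : SimpleGraph V) : Prop :=
  G.Connected ∧ 4 ≤ Fintype.card V ∧
    ∀ e ∈ G.edgeSet, ∃ M : G.Subgraph, M.IsPerfectMatching ∧ e ∈ M.edgeSet

/-- A matching covered graph is minimal if deleting any edge destroys the property. -/
def MinimalMatchingCovered {V : Type*} [Fintype V] (G : SimpleGraph V) : Prop :=
  MatchingCovered G ∧ ∀ e ∈ G.edgeSet, ¬ MatchingCovered (G.deleteEdges {e})

/-- The graph obtained from a tree `T` by isomorphic leaf matching: two disjoint copies of `T`
(the `inl` copy and the `inr` copy), together with an edge joining the two copies of each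
leaf (degree-1 vertex) of `T`. -/
def leafMatching {V : Type*} (T : SimpleGraph V) : SimpleGraph (V ⊕ V) where
  Adj x y :=
    match x, y with
    | Sum.inl u, Sum.inl v => T.Adj u v
    | Sum.inr u, Sum.inr v => T.Adj u v
    | Sum.inl u, Sum.inr v => u = v ∧ degN T u = 1
    | Sum.inr u, Sum.inl v => u = v ∧ degN T v = 1
  symm := ⟨by
    rintro (u | u) (v | v) h
    · exact T.symm.symm _ _ h
    · exact ⟨h.1.symm, h.2⟩
    · exact ⟨h.1.symm, h.2⟩
    · exact T.symm.symm _ _ h⟩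
  loopless := ⟨by
    rintro (u | u) h
    · exact T.loopless.irrefl u h
    · exact T.loopless.irrefl u h⟩

/-- The star `K_{1,p}`: one center vertex (`none`) adjacent to `p` leaf vertices. -/
def starGraphK (p : ℕ) : SimpleGraph (Option (Fin p)) where
  Adj x y := x ≠ y ∧ (x = none ∨ y = none)
  symm := ⟨fun _ _ h => ⟨h.1.symm, h.2.symm⟩⟩
  loopless := ⟨fun _ h => h.1 rfl⟩


section Helpers
open Finset

lemma walk_stay {V : Type*} {G : SimpleGraph V} {S : Set V}
    (hS : ∀ {x y : V}, G.Adj x y → x ∈ S → y ∈ S)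
    {x y : V} (w : G.Walk x y) (hx : x ∈ S) : y ∈ S := by
  induction w with
  | nil => exact hx
  | cons h p ih => exact ih (hS h hx)

lemma exists_neighbor {V : Type*} [Fintype V] {G : SimpleGraph V}
    (hc : G.Connected) (hcard : 2 ≤ Fintype.card V) (v : V) : ∃ u, G.Adj v u := by
  obtain ⟨w, hw⟩ := Fintype.exists_ne_of_one_lt_card (by omega) v
  obtain ⟨p⟩ := hc.preconnected v w
  cases p with
  | nil => exact absurd rfl hw
  | cons h _ => exact ⟨_, h⟩

lemma two_le_degree_of_mc {V : Type*} [Fintype V] {G : SimpleGraph V} [DecidableRel G.Adj]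
    (h : MatchingCovered G) (v : V) : 2 ≤ G.degree v := by
  classical
  obtain ⟨hc, hcard, hpm⟩ := h
  obtain ⟨u, hu⟩ := exists_neighbor hc (by omega) v
  by_contra hlt
  push_neg at hlt
  have h1 : G.degree v = 1 := by
    have : 1 ≤ G.degree v := by
      rw [← card_neighborFinset_eq_degree]
      exact Finset.card_pos.mpr ⟨u, by rwa [mem_neighborFinset]⟩
    omega
  have hNv : G.neighborFinset v = {u} := by
    obtain ⟨x, hx⟩ := Finset.card_eq_one.mp ((G.card_neighborFinset_eq_degree v).trans h1)
    have : u ∈ G.neighborFinset v := by rwa [mem_neighborFinset]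
    rw [hx] at this ⊢
    simp only [Finset.mem_singleton] at this
    rw [this]
  have hNv' : ∀ z, G.Adj v z → z = u := by
    intro z hz
    have : z ∈ G.neighborFinset v := by rwa [mem_neighborFinset]
    simpa [hNv] using this
  -- u has a neighbor z ≠ v
  obtain ⟨z, hz, hzv⟩ : ∃ z, G.Adj u z ∧ z ≠ v := by
    by_contra hcon
    push_neg at hcon
    -- then {u, v} is closed under adjacency
    have hclosed : ∀ {x y : V}, G.Adj x y → x ∈ ({u, v} : Set V) → y ∈ ({u, v} : Set V) := by
      intro x y hxy hx
      rcases hx with rfl | rfl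
      · right; exact (hcon y hxy) ▸ rfl
      · left; exact (hNv' y hxy) ▸ rfl
    obtain ⟨x, hxu, hxv⟩ : ∃ x, x ≠ u ∧ x ≠ v := by
      by_contra hcon2
      push_neg at hcon2
      have hsub : (Finset.univ : Finset V) ⊆ {u, v} := by
        intro x _
        by_cases hxu : x = u
        · subst hxu; simp
        · have := hcon2 x hxu; subst this; simp
      have := Finset.card_le_card hsub
      have h2 : ({u, v} : Finset V).card ≤ 2 := Finset.card_insert_le _ _ |>.trans (by simp)
      rw [Finset.card_univ] at this
      omega
    obtain ⟨p⟩ := hc.preconnected v x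
    have := walk_stay hclosed p (by right; rfl)
    rcases this with h | h
    · exact hxu h
    · exact hxv h
  obtain ⟨M, hM, heM⟩ := hpm s(u, z) hz
  have hMuz : M.Adj u z := heM
  obtain ⟨w', hw', huniq⟩ := (Subgraph.isPerfectMatching_iff.mp hM) v
  have hwu : w' = u := hNv' w' (M.adj_sub hw')
  have hMvu : M.Adj v u := hwu ▸ hw'
  obtain ⟨w2, hw2, huniq2⟩ := (Subgraph.isPerfectMatching_iff.mp hM) u
  have e1 : z = w2 := huniq2 z hMuz
  have e2 : v = w2 := huniq2 v hMvu.symm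
  exact hzv (e1.trans e2.symm)


lemma pm_partner {V : Type*} {G : SimpleGraph V} {M : G.Subgraph} (hM : M.IsPerfectMatching) :
    ∃ μ : V → V, (∀ v, M.Adj v (μ v)) ∧ ∀ v w, M.Adj v w → w = μ v := by
  have h := Subgraph.isPerfectMatching_iff.mp hM
  choose μ h1 h2 using h
  exact ⟨μ, h1, h2⟩

lemma fin2_cases (i j x : Fin 2) (h : i ≠ j) : x = i ∨ x = j := by omega

lemma color_classes_card_eq {V : Type*} [Fintype V] {G : SimpleGraph V} [DecidableEq V]
    (C : G.Coloring (Fin 2)) {M : G.Subgraph} (hM : M.IsPerfectMatching) (i j : Fin 2) :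
    #(univ.filter (fun v => C v = i)) = #(univ.filter (fun v => C v = j)) := by
  classical
  by_cases hij : i = j
  · rw [hij]
  obtain ⟨μ, hμ1, hμ2⟩ := pm_partner hM
  have hinv : ∀ v, μ (μ v) = v := fun v => (hμ2 (μ v) v (hμ1 v).symm).symm
  have hop : ∀ v, C (μ v) ≠ C v := fun v => C.valid (M.adj_sub (hμ1 v)).symm
  apply Finset.card_bij (fun v _ => μ v)
  · intro v hv
    simp only [Finset.mem_filter, Finset.mem_univ, true_and] at hv ⊢
    have h1 := hop v
    rw [hv] at h1
    rcases fin2_cases i j (C (μ v)) hij with h | h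
    · exact absurd h h1
    · exact h
  · intro v _ w _ h
    rw [← hinv v, h, hinv w]
  · intro w hw
    refine ⟨μ w, ?_, hinv w⟩
    simp only [Finset.mem_filter, Finset.mem_univ, true_and] at hw ⊢
    have h1 := hop w
    rw [hw] at h1
    rcases fin2_cases i j (C (μ w)) hij with h | h
    · exact h
    · exact absurd h h1

lemma nbrs_of_degree_two {V : Type*} [Fintype V] {G : SimpleGraph V} [DecidableRel G.Adj]
    [DecidableEq V] {v x : V} (h2 : G.degree v = 2) (hx : G.Adj v x) :
    ∃ y, y ≠ x ∧ G.neighborFinset v = {x, y} := by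
  have hcard : #(G.neighborFinset v) = 2 := by rwa [card_neighborFinset_eq_degree]
  have hxm : x ∈ G.neighborFinset v := by rwa [mem_neighborFinset]
  obtain ⟨u, w, huw, huvw⟩ := Finset.card_eq_two.mp hcard
  rw [huvw] at hxm
  rcases Finset.mem_insert.mp hxm with rfl | h
  · exact ⟨w, fun h => huw h.symm, huvw⟩
  · rw [Finset.mem_singleton] at h
    subst h
    exact ⟨u, fun h => huw h, by rw [huvw, Finset.pair_comm]⟩


lemma sum_deg_color {V : Type*} [Fintype V] (G : SimpleGraph V) [DecidableRel G.Adj]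
    [DecidableEq V] (C : G.Coloring (Fin 2)) (i : Fin 2) :
    ∑ v ∈ Finset.univ.filter (fun v => C v = i), G.degree v = #G.edgeFinset := by
  classical
  have h1 : ∀ v ∈ Finset.univ.filter (fun v => C v = i), G.degree v
      = #((Finset.univ.filter (fun d : G.Dart => C d.fst = i)).filter (fun d => d.fst = v)) := by
    intro v hv
    rw [← G.dart_fst_fiber_card_eq_degree v]
    congr 1
    ext d
    simp only [Finset.mem_filter, Finset.mem_univ, true_and]
    constructor
    · rintro rfl; exact ⟨(Finset.mem_filter.mp hv).2, rfl⟩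
    · rintro ⟨_, h⟩; exact h
  rw [Finset.sum_congr rfl h1]
  rw [← Finset.card_eq_sum_card_fiberwise (f := fun d : G.Dart => d.fst)
    (s := Finset.univ.filter (fun d : G.Dart => C d.fst = i))
    (t := Finset.univ.filter (fun v => C v = i))
    (by intro d hd; simp only [Finset.coe_filter, Set.mem_setOf_eq, Finset.mem_filter, Finset.mem_univ, true_and] at *; exact hd)]
  -- now: #(darts with C fst = i) = #edgeFinset
  apply Finset.card_bij (fun d _ => d.edge)
  · intro d hd
    rw [mem_edgeFinset]; exact d.edge_mem
  · intro d hd d' hd' he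
    rcases (dart_edge_eq_iff d d').mp he with h | h
    · exact h
    · exfalso
      simp only [Finset.mem_filter] at hd hd'
      rw [h] at hd
      have : C d'.snd ≠ C d'.fst := C.valid d'.adj.symm
      exact this (hd.2.trans hd'.2.symm)
  · intro e he
    rw [mem_edgeFinset] at he
    induction e with
    | _ x y =>
      have hadj : G.Adj x y := he
      by_cases hx : C x = i
      · exact ⟨⟨(x, y), hadj⟩, by simpa using hx, rfl⟩
      · refine ⟨⟨(y, x), hadj.symm⟩, ?_, Sym2.eq_swap⟩
        simp only [Finset.mem_filter, Finset.mem_univ, true_and]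
        have : C x ≠ C y := C.valid hadj
        omega

lemma degN_eq_degree {V : Type*} [Fintype V] (G : SimpleGraph V) [DecidableRel G.Adj] (v : V) :
    degN G v = G.degree v := by
  rw [degN, ← card_neighborSet_eq_degree, Set.ncard_eq_toFinset_card', Set.toFinset_card]


lemma starGraphK_degN_some {p : ℕ} (i : Fin p) : degN (starGraphK p) (some i) = 1 := by
  have h : (starGraphK p).neighborSet (some i) = {none} := by
    ext x
    simp only [neighborSet, starGraphK, Set.mem_setOf_eq, Set.mem_singleton_iff]
    constructor
    · rintro ⟨h1, h2 | h2⟩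
      · exact absurd h2 (by simp)
      · exact h2
    · rintro rfl
      exact ⟨by simp, Or.inr rfl⟩
  rw [degN, h, Set.ncard_singleton]

lemma starGraphK_degN_none {p : ℕ} (hp : 2 ≤ p) : degN (starGraphK p) none ≠ 1 := by
  intro h
  rw [degN, Set.ncard_eq_one] at h
  obtain ⟨z, hz⟩ := h
  have h0 : (some (⟨0, by omega⟩ : Fin p)) ∈ (starGraphK p).neighborSet none := by
    constructor
    · simp
    · exact Or.inl rfl
  have h1 : (some (⟨1, by omega⟩ : Fin p)) ∈ (starGraphK p).neighborSet none := by
    constructor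
    · simp
    · exact Or.inl rfl
  rw [hz] at h0 h1
  rw [Set.mem_singleton_iff] at h0 h1
  rw [← h1] at h0
  simp only [Option.some.injEq, Fin.mk.injEq] at h0
  omega


lemma pm_of_involution {V : Type*} {H : SimpleGraph V} (p : V → V)
    (hinv : ∀ v, p (p v) = v) (hadj : ∀ v, H.Adj v (p v)) :
    ∃ M : H.Subgraph, M.IsPerfectMatching ∧ ∀ v, M.Adj v (p v) := by
  refine ⟨⟨Set.univ, fun x y => y = p x, ?_, ?_, ?_⟩, ⟨?_, ?_⟩, ?_⟩
  · rintro x y rfl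
    exact hadj x
  · intro x y _
    trivial
  · constructor
    rintro x y rfl
    exact (hinv x).symm
  · intro v _
    exact ⟨p v, rfl, fun y hy => hy⟩
  · intro v
    trivial
  · intro v
    rfl

end Helpers

open Finset

/-- A 2-vertex extremal minimal bipartite matching covered graph with exactly two vertices of
degree at least 3 is obtained from a star by isomorphic leaf matching. -/
theorem stmt16 {V : Type*} [Fintype V] (G : SimpleGraph V)
    (hbip : G.Colorable 2) (hmin : MinimalMatchingCovered G)
    (hext : {v | degN G v = 2}.ncard + 2 * Fintype.card V = 2 * G.edgeSet.ncard + 4)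
    (h2 : {v | 3 ≤ degN G v}.ncard = 2) :
    ∃ p : ℕ, 3 ≤ p ∧ Nonempty (G ≃g leafMatching (starGraphK p)) := by
  classical
  obtain ⟨⟨hconn, hcard4, hpm⟩, hminE⟩ := hmin
  have hdeg2 : ∀ v, 2 ≤ G.degree v := fun v => two_le_degree_of_mc ⟨hconn, hcard4, hpm⟩ v
  set S : Finset V := univ.filter (fun v => G.degree v = 2) with hS_def
  set T : Finset V := univ.filter (fun v => 3 ≤ G.degree v) with hT_def
  have hset1 : {v | degN G v = 2}.ncard = #S := by
    rw [Set.ncard_eq_toFinset_card']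
    congr 1
    ext v
    simp [hS_def, degN_eq_degree]
  have hset2 : {v | 3 ≤ degN G v}.ncard = #T := by
    rw [Set.ncard_eq_toFinset_card']
    congr 1
    ext v
    simp [hT_def, degN_eq_degree]
  have hmcard : G.edgeSet.ncard = #G.edgeFinset := by
    rw [Set.ncard_eq_toFinset_card']
    congr 1
  rw [hset1, hmcard] at hext
  rw [hset2] at h2
  set m := #G.edgeFinset with hm_def
  set n := Fintype.card V with hn_def
  -- the two vertices of degree ≥ 3
  obtain ⟨a, b, hab_ne, hT⟩ := Finset.card_eq_two.mp h2
  have haT : 3 ≤ G.degree a := by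
    have : a ∈ T := by rw [hT]; simp
    simpa [hT_def] using this
  have hbT : 3 ≤ G.degree b := by
    have : b ∈ T := by rw [hT]; simp
    simpa [hT_def] using this
  have hSmem : ∀ v, v ≠ a → v ≠ b → v ∈ S := by
    intro v hva hvb
    have hvT : v ∉ T := by rw [hT]; simp [hva, hvb]
    simp only [hT_def, Finset.mem_filter, Finset.mem_univ, true_and, not_le] at hvT
    have := hdeg2 v
    simp only [hS_def, Finset.mem_filter, Finset.mem_univ, true_and]
    omega
  have haS : a ∉ S := by simp [hS_def]; omega
  have hbS : b ∉ S := by simp [hS_def]; omega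
  -- card V = #S + 2
  have hcardV : n = #S + 2 := by
    have : (univ : Finset V) = S ∪ T := by
      ext v
      simp only [Finset.mem_union, Finset.mem_univ, true_iff]
      by_cases hva : v = a
      · right; rw [hT]; simp [hva]
      by_cases hvb : v = b
      · right; rw [hT]; simp [hvb]
      · left; exact hSmem v hva hvb
    have hdisj : Disjoint S T := by
      rw [Finset.disjoint_filter]
      intro v _ h
      omega
    rw [hn_def, ← Finset.card_univ, this, Finset.card_union_of_disjoint hdisj, hT,
      Finset.card_pair hab_ne]
  -- handshake
  have hhs : ∑ v, G.degree v = 2 * m := G.sum_degrees_eq_twice_card_edges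
  have hsplit : ∑ v, G.degree v = (∑ v ∈ S, G.degree v) + (∑ v ∈ T, G.degree v) := by
    rw [← Finset.sum_union]
    · congr 1
      ext v
      simp only [Finset.mem_union, Finset.mem_univ, true_iff]
      by_cases hva : v = a
      · right; rw [hT]; simp [hva]
      by_cases hvb : v = b
      · right; rw [hT]; simp [hvb]
      · left; exact hSmem v hva hvb
    · rw [Finset.disjoint_filter]
      intro v _ h
      omega
  have hsumS : ∑ v ∈ S, G.degree v = 2 * #S := by
    rw [Finset.sum_congr rfl (fun v hv => by
      simp only [hS_def, Finset.mem_filter] at hv; exact hv.2)]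
    simp [mul_comm]
  have hsumT : ∑ v ∈ T, G.degree v = G.degree a + G.degree b := by
    rw [hT, Finset.sum_pair hab_ne]
  have key1 : 2 * m = 2 * #S + (G.degree a + G.degree b) := by
    rw [← hhs, hsplit, hsumS, hsumT]
  have key2 : #S = G.degree a + G.degree b := by omega
  -- coloring
  obtain ⟨C⟩ := hbip
  -- a perfect matching exists
  obtain ⟨v0⟩ : Nonempty V := Fintype.card_pos_iff.mp (by omega)
  obtain ⟨u0, hu0⟩ := exists_neighbor hconn (by omega) v0
  obtain ⟨M, hM, -⟩ := hpm s(v0, u0) hu0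
  have hXcard : ∀ i j : Fin 2,
      #(univ.filter (fun v => C v = i)) = #(univ.filter (fun v => C v = j)) :=
    fun i j => color_classes_card_eq C hM i j
  have hXsum : ∀ i : Fin 2, ∑ v ∈ univ.filter (fun v => C v = i), G.degree v = m :=
    fun i => sum_deg_color G C i
  have hCval : ∀ {x y : V}, G.Adj x y → C x ≠ C y := fun h => C.valid h
  -- rule out C a = C b
  have hCab : C a ≠ C b := by
    intro heq
    set i := C a with hi_def
    set j := i + 1 with hj_def
    have hij : i ≠ j := by omega
    have hcases : ∀ x : Fin 2, x = i ∨ x = j := fun x => fin2_cases i j x hij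
    set Si := S.filter (fun v => C v = i) with hSi_def
    set Sj := S.filter (fun v => C v = j) with hSj_def
    have hXi : univ.filter (fun v => C v = i) = {a, b} ∪ Si := by
      ext v
      simp only [Finset.mem_filter, Finset.mem_univ, true_and, Finset.mem_union,
        Finset.mem_insert, Finset.mem_singleton, hSi_def]
      constructor
      · intro hv
        by_cases hva : v = a
        · exact Or.inl (Or.inl hva)
        by_cases hvb : v = b
        · exact Or.inl (Or.inr hvb)
        · exact Or.inr ⟨hSmem v hva hvb, hv⟩
      · rintro ((rfl | rfl) | ⟨-, hv⟩)
        · rfl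
        · exact heq.symm
        · exact hv
    have hXj : univ.filter (fun v => C v = j) = Sj := by
      ext v
      simp only [Finset.mem_filter, Finset.mem_univ, true_and, hSj_def]
      constructor
      · intro hv
        refine ⟨hSmem v ?_ ?_ , hv⟩
        · rintro rfl; exact hij (hv ▸ rfl)
        · rintro rfl; rw [← heq] at hv; exact hij (hv ▸ rfl)
      · exact fun h => h.2
    have hdisjab : Disjoint ({a, b} : Finset V) Si := by
      simp only [Finset.disjoint_left, Finset.mem_insert, Finset.mem_singleton]
      rintro v (rfl | rfl) hv
      · exact haS (Finset.mem_filter.mp hv).1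
      · exact hbS (Finset.mem_filter.mp hv).1
    have hSsplit : #S = #Si + #Sj := by
      have hdisj : Disjoint Si Sj := by
        rw [hSi_def, hSj_def, Finset.disjoint_filter]
        intro v _ hvi hvj
        exact hij (hvi ▸ hvj ▸ rfl)
      have hunion : Si ∪ Sj = S := by
        ext v
        simp only [Finset.mem_union, hSi_def, hSj_def, Finset.mem_filter]
        constructor
        · rintro (⟨h, -⟩ | ⟨h, -⟩) <;> exact h
        · intro h
          rcases hcases (C v) with hc | hc
          · exact Or.inl ⟨h, hc⟩
          · exact Or.inr ⟨h, hc⟩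
      rw [← hunion, Finset.card_union_of_disjoint hdisj]
    have hsumXi := hXsum i
    rw [hXi, Finset.sum_union hdisjab, Finset.sum_pair hab_ne] at hsumXi
    have hsumSi : ∑ v ∈ Si, G.degree v = 2 * #Si := by
      rw [Finset.sum_congr rfl (fun v hv => by
        have := (Finset.mem_filter.mp ((Finset.mem_filter.mp hv).1)).2
        exact this)]
      simp [mul_comm]
    have hsumXj := hXsum j
    rw [hXj] at hsumXj
    have hsumSj : ∑ v ∈ Sj, G.degree v = 2 * #Sj := by
      rw [Finset.sum_congr rfl (fun v hv => by
        have := (Finset.mem_filter.mp ((Finset.mem_filter.mp hv).1)).2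
        exact this)]
      simp [mul_comm]
    have hXc := hXcard i j
    rw [hXi, hXj, Finset.card_union_of_disjoint hdisjab, Finset.card_pair hab_ne] at hXc
    rw [hsumSi] at hsumXi
    rw [hsumSj] at hsumXj
    omega
  -- main case: C a ≠ C b
  have hSdeg : ∀ v ∈ S, G.degree v = 2 := fun v hv => (Finset.mem_filter.mp hv).2
  set Si := S.filter (fun v => C v = C a) with hSi_def
  set Sj := S.filter (fun v => C v = C b) with hSj_def
  have hcases : ∀ x : Fin 2, x = C a ∨ x = C b := fun x => fin2_cases _ _ x hCab
  have haSi : a ∉ Si := fun h => haS (Finset.mem_filter.mp h).1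
  have haSj : a ∉ Sj := fun h => haS (Finset.mem_filter.mp h).1
  have hbSi : b ∉ Si := fun h => hbS (Finset.mem_filter.mp h).1
  have hbSj : b ∉ Sj := fun h => hbS (Finset.mem_filter.mp h).1
  have hSiSj : ∀ v, v ∈ Si → v ∈ Sj → False := by
    intro v h1 h2
    exact hCab (((Finset.mem_filter.mp h1).2).symm.trans (Finset.mem_filter.mp h2).2)
  have hXi : univ.filter (fun v => C v = C a) = insert a Si := by
    ext v
    simp only [Finset.mem_filter, Finset.mem_univ, true_and, Finset.mem_insert, hSi_def]
    constructor
    · intro hv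
      by_cases hva : v = a
      · exact Or.inl hva
      by_cases hvb : v = b
      · subst hvb; exact absurd hv.symm hCab
      · exact Or.inr ⟨hSmem v hva hvb, hv⟩
    · rintro (rfl | h)
      · rfl
      · exact h.2
  have hXj : univ.filter (fun v => C v = C b) = insert b Sj := by
    ext v
    simp only [Finset.mem_filter, Finset.mem_univ, true_and, Finset.mem_insert, hSj_def]
    constructor
    · intro hv
      by_cases hvb : v = b
      · exact Or.inl hvb
      by_cases hva : v = a
      · subst hva; exact absurd hv hCab
      · exact Or.inr ⟨hSmem v hva hvb, hv⟩
    · rintro (rfl | h)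
      · rfl
      · exact h.2
  have hsum_i := hXsum (C a)
  rw [hXi, Finset.sum_insert haSi] at hsum_i
  have hsumSi : ∑ v ∈ Si, G.degree v = 2 * #Si := by
    rw [Finset.sum_congr rfl (fun v hv => hSdeg v (Finset.mem_filter.mp hv).1)]
    simp [mul_comm]
    rfl
  have hsum_j := hXsum (C b)
  rw [hXj, Finset.sum_insert hbSj] at hsum_j
  have hsumSj : ∑ v ∈ Sj, G.degree v = 2 * #Sj := by
    rw [Finset.sum_congr rfl (fun v hv => hSdeg v (Finset.mem_filter.mp hv).1)]
    simp [mul_comm]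
    rfl
  have hXc := hXcard (C a) (C b)
  rw [hXi, hXj, Finset.card_insert_of_notMem haSi, Finset.card_insert_of_notMem hbSj] at hXc
  have hSsplit : #S = #Si + #Sj := by
    have hdisj : Disjoint Si Sj := by
      rw [hSi_def, hSj_def, Finset.disjoint_filter]
      intro v _ hvi hvj
      exact hCab (hvi ▸ hvj ▸ rfl)
    have hunion : Si ∪ Sj = S := by
      ext v
      simp only [Finset.mem_union, hSi_def, hSj_def, Finset.mem_filter]
      constructor
      · rintro (⟨h, -⟩ | ⟨h, -⟩) <;> exact h
      · intro h
        rcases hcases (C v) with hc | hc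
        · exact Or.inl ⟨h, hc⟩
        · exact Or.inr ⟨h, hc⟩
    rw [← hunion, Finset.card_union_of_disjoint hdisj]
  rw [hsumSi] at hsum_i
  rw [hsumSj] at hsum_j
  have hdb : G.degree b = G.degree a := by omega
  have hSi_k : #Si = G.degree a := by omega
  have hSj_k : #Sj = G.degree a := by omega
  have hNa : ∀ v, G.Adj a v → v = b ∨ v ∈ Sj := by
    intro v hv
    by_cases hvb : v = b
    · exact Or.inl hvb
    right
    have hvne_a : v ≠ a := fun h => G.loopless.irrefl a (h ▸ hv)
    have hvS : v ∈ S := hSmem v hvne_a hvb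
    rcases hcases (C v) with h | h
    · exact absurd h.symm (hCval hv)
    · exact Finset.mem_filter.mpr ⟨hvS, h⟩
  have hNb : ∀ v, G.Adj b v → v = a ∨ v ∈ Si := by
    intro v hv
    by_cases hva : v = a
    · exact Or.inl hva
    right
    have hvne_b : v ≠ b := fun h => G.loopless.irrefl b (h ▸ hv)
    have hvS : v ∈ S := hSmem v hva hvne_b
    rcases hcases (C v) with h | h
    · exact Finset.mem_filter.mpr ⟨hvS, h⟩
    · exact absurd h.symm (hCval hv)
  by_cases hab : G.Adj a b
  · exfalso
    -- unique non-neighbour of a in Sj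
    have hNa_eq : G.neighborFinset a = insert b (Sj.filter (fun v => G.Adj a v)) := by
      ext v
      rw [mem_neighborFinset]
      simp only [Finset.mem_insert, Finset.mem_filter]
      constructor
      · intro hv
        rcases hNa v hv with rfl | h
        · exact Or.inl rfl
        · exact Or.inr ⟨h, hv⟩
      · rintro (rfl | ⟨-, h⟩)
        · exact hab
        · exact h
    have hfiltb : b ∉ Sj.filter (fun v => G.Adj a v) := fun h => hbSj (Finset.mem_filter.mp h).1
    have hdega : G.degree a = #(Sj.filter (fun v => G.Adj a v)) + 1 := by
      rw [← card_neighborFinset_eq_degree, hNa_eq, Finset.card_insert_of_notMem hfiltb]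
    have hcards1 : #(Sj.filter (fun v => ¬ G.Adj a v)) = 1 := by
      have h := Finset.card_filter_add_card_filter_not
        (s := Sj) (p := fun v => G.Adj a v)
      omega
    obtain ⟨s1, hs1⟩ := Finset.card_eq_one.mp hcards1
    have hs1mem : s1 ∈ Sj.filter (fun v => ¬ G.Adj a v) := by
      rw [hs1]
      exact Finset.mem_singleton_self s1
    have hs1Sj : s1 ∈ Sj := (Finset.mem_filter.mp hs1mem).1
    have hs1na : ¬ G.Adj a s1 := (Finset.mem_filter.mp hs1mem).2
    have hadj_aSj : ∀ v, v ∈ Sj → v ≠ s1 → G.Adj a v := by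
      intro v hv hne
      by_contra h
      have hm : v ∈ Sj.filter (fun v => ¬ G.Adj a v) := Finset.mem_filter.mpr ⟨hv, h⟩
      rw [hs1] at hm
      exact hne (Finset.mem_singleton.mp hm)
    -- unique non-neighbour of b in Si
    have hNb_eq : G.neighborFinset b = insert a (Si.filter (fun v => G.Adj b v)) := by
      ext v
      rw [mem_neighborFinset]
      simp only [Finset.mem_insert, Finset.mem_filter]
      constructor
      · intro hv
        rcases hNb v hv with rfl | h
        · exact Or.inl rfl
        · exact Or.inr ⟨h, hv⟩
      · rintro (rfl | ⟨-, h⟩)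
        · exact hab.symm
        · exact h
    have hfilta : a ∉ Si.filter (fun v => G.Adj b v) := fun h => haSi (Finset.mem_filter.mp h).1
    have hdegb : G.degree b = #(Si.filter (fun v => G.Adj b v)) + 1 := by
      rw [← card_neighborFinset_eq_degree, hNb_eq, Finset.card_insert_of_notMem hfilta]
    have hcards0 : #(Si.filter (fun v => ¬ G.Adj b v)) = 1 := by
      have h := Finset.card_filter_add_card_filter_not
        (s := Si) (p := fun v => G.Adj b v)
      omega
    obtain ⟨s0, hs0⟩ := Finset.card_eq_one.mp hcards0
    have hs0mem : s0 ∈ Si.filter (fun v => ¬ G.Adj b v) := by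
      rw [hs0]
      exact Finset.mem_singleton_self s0
    have hs0Si : s0 ∈ Si := (Finset.mem_filter.mp hs0mem).1
    have hs0nb : ¬ G.Adj b s0 := (Finset.mem_filter.mp hs0mem).2
    have hadj_bSi : ∀ v, v ∈ Si → v ≠ s0 → G.Adj b v := by
      intro v hv hne
      by_contra h
      have hm : v ∈ Si.filter (fun v => ¬ G.Adj b v) := Finset.mem_filter.mpr ⟨hv, h⟩
      rw [hs0] at hm
      exact hne (Finset.mem_singleton.mp hm)
    have hs1S : s1 ∈ S := (Finset.mem_filter.mp hs1Sj).1
    have hs0S : s0 ∈ S := (Finset.mem_filter.mp hs0Si).1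
    -- neighbours of s1 lie in Si, neighbours of s0 lie in Sj
    have hnbr_s1 : ∀ z, G.Adj s1 z → z ∈ Si := by
      intro z hz
      by_cases hza : z = a
      · exact absurd (hza ▸ hz).symm hs1na
      by_cases hzb : z = b
      · subst hzb
        rcases hNb s1 hz.symm with h | h
        · exact absurd h (fun hh => haSj (hh ▸ hs1Sj))
        · exact absurd h (fun hh => hSiSj s1 hh hs1Sj)
      have hzS : z ∈ S := hSmem z hza hzb
      rcases hcases (C z) with h | h
      · exact Finset.mem_filter.mpr ⟨hzS, h⟩
      · exact absurd ((Finset.mem_filter.mp hs1Sj).2.trans h.symm) (hCval hz)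
    have hnbr_s0 : ∀ z, G.Adj s0 z → z ∈ Sj := by
      intro z hz
      by_cases hzb : z = b
      · exact absurd (hzb ▸ hz).symm hs0nb
      by_cases hza : z = a
      · subst hza
        rcases hNa s0 hz.symm with h | h
        · exact absurd h (fun hh => hbSi (hh ▸ hs0Si))
        · exact absurd h (fun hh => hSiSj s0 hs0Si hh)
      have hzS : z ∈ S := hSmem z hza hzb
      rcases hcases (C z) with h | h
      · exact absurd ((Finset.mem_filter.mp hs0Si).2.trans h.symm) (hCval hz)
      · exact Finset.mem_filter.mpr ⟨hzS, h⟩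
    -- a vertex of degree two with two distinct known neighbours has exactly those
    have htwo : ∀ x p q, x ∈ S → G.Adj x p → G.Adj x q → p ≠ q →
        (∀ t, G.Adj x t → t = p ∨ t = q) := by
      intro x p q hxS hp hq hne t ht
      obtain ⟨r, hrne, hN⟩ := nbrs_of_degree_two (hSdeg x hxS) hp
      have hqm : q ∈ ({p, r} : Finset V) := by
        rw [← hN, mem_neighborFinset]
        exact hq
      have htm : t ∈ ({p, r} : Finset V) := by
        rw [← hN, mem_neighborFinset]
        exact ht
      rcases Finset.mem_insert.mp hqm with h | h
      · exact absurd h.symm hne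
      · have hqr : q = r := Finset.mem_singleton.mp h
        rcases Finset.mem_insert.mp htm with h2 | h2
        · exact Or.inl h2
        · exact Or.inr ((Finset.mem_singleton.mp h2).trans hqr.symm)
    by_cases hadj10 : G.Adj s1 s0
    case neg =>
      -- s0 has two neighbours in Sj, both ≠ s1; a perfect matching through ab is impossible
      have hpos : 0 < #(G.neighborFinset s0) := by
        rw [card_neighborFinset_eq_degree, hSdeg s0 hs0S]
        omega
      obtain ⟨z0, hz0⟩ := Finset.card_pos.mp hpos
      have hz0adj : G.Adj s0 z0 := by rwa [mem_neighborFinset] at hz0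
      obtain ⟨w2, hw2ne, hNs0⟩ := nbrs_of_degree_two (hSdeg s0 hs0S) hz0adj
      have hw2adj : G.Adj s0 w2 := by
        rw [← mem_neighborFinset, hNs0]
        simp
      have hz0Sj : z0 ∈ Sj := hnbr_s0 z0 hz0adj
      have hw2Sj : w2 ∈ Sj := hnbr_s0 w2 hw2adj
      have hz0s1 : z0 ≠ s1 := fun h => hadj10 ((h ▸ hz0adj).symm)
      have hw2s1 : w2 ≠ s1 := fun h => hadj10 ((h ▸ hw2adj).symm)
      have hz0nbrs : ∀ t, G.Adj z0 t → t = a ∨ t = s0 :=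
        htwo z0 a s0 (Finset.mem_filter.mp hz0Sj).1 (hadj_aSj z0 hz0Sj hz0s1).symm hz0adj.symm
          (fun h => haSi (h ▸ hs0Si))
      have hw2nbrs : ∀ t, G.Adj w2 t → t = a ∨ t = s0 :=
        htwo w2 a s0 (Finset.mem_filter.mp hw2Sj).1 (hadj_aSj w2 hw2Sj hw2s1).symm hw2adj.symm
          (fun h => haSi (h ▸ hs0Si))
      obtain ⟨M2, hM2, habM⟩ := hpm s(a, b) hab
      have habM' : M2.Adj a b := habM
      have hMu := Subgraph.isPerfectMatching_iff.mp hM2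
      have hpartner : ∀ t, t ∈ Sj → (∀ t', G.Adj t t' → t' = a ∨ t' = s0) → M2.Adj t s0 := by
        intro t htSj hnbrs
        obtain ⟨q, hq, hqu⟩ := hMu t
        rcases hnbrs q (M2.adj_sub hq) with hqa | hqs0
        · exfalso
          have hq' : M2.Adj t a := hqa ▸ hq
          obtain ⟨q2, hq2, hq2u⟩ := hMu a
          have h1 : b = q2 := hq2u b habM'
          have h2 : t = q2 := hq2u t hq'.symm
          exact hbSj ((h1.trans h2.symm) ▸ htSj)
        · exact hqs0 ▸ hq
      have h1 : M2.Adj z0 s0 := hpartner z0 hz0Sj hz0nbrs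
      have h2 : M2.Adj w2 s0 := hpartner w2 hw2Sj hw2nbrs
      obtain ⟨q, hq, hqu⟩ := hMu s0
      exact hw2ne ((hqu w2 h2.symm).trans (hqu z0 h1.symm).symm)
    case pos =>
      -- full structure: G = edge ab + path a-w-s0-s1-y-b + (k-2) paths a-u-f u-b
      obtain ⟨y, hyne, hNs1'⟩ := nbrs_of_degree_two (hSdeg s1 hs1S) hadj10
      have hadj_s1y : G.Adj s1 y := by
        rw [← mem_neighborFinset, hNs1']
        simp
      have hySi : y ∈ Si := hnbr_s1 y hadj_s1y
      obtain ⟨w, hwne, hNs0'⟩ := nbrs_of_degree_two (hSdeg s0 hs0S) hadj10.symm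
      have hadj_s0w : G.Adj s0 w := by
        rw [← mem_neighborFinset, hNs0']
        simp
      have hwSj : w ∈ Sj := hnbr_s0 w hadj_s0w
      have hadj_aw : G.Adj a w := hadj_aSj w hwSj hwne
      have hadj_by : G.Adj b y := hadj_bSi y hySi hyne
      -- disequalities
      have hs1a : s1 ≠ a := fun h => haSj (h ▸ hs1Sj)
      have hs1b : s1 ≠ b := fun h => hbSj (h ▸ hs1Sj)
      have hs0a : s0 ≠ a := fun h => haSi (h ▸ hs0Si)
      have hs0b : s0 ≠ b := fun h => hbSi (h ▸ hs0Si)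
      have hwa : w ≠ a := fun h => haSj (h ▸ hwSj)
      have hwb : w ≠ b := fun h => hbSj (h ▸ hwSj)
      have hya : y ≠ a := fun h => haSi (h ▸ hySi)
      have hyb : y ≠ b := fun h => hbSi (h ▸ hySi)
      have hs1s0 : s1 ≠ s0 := fun h => hSiSj s1 (by rw [h]; exact hs0Si) hs1Sj
      have hs1y : s1 ≠ y := fun h => hSiSj s1 (by rw [h]; exact hySi) hs1Sj
      have hws0 : w ≠ s0 := fun h => hSiSj w (by rw [h]; exact hs0Si) hwSj
      have hwy : w ≠ y := fun h => hSiSj w (by rw [h]; exact hySi) hwSj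
      -- neighbour enumerations
      have hnbrs_s1 : ∀ t, G.Adj s1 t → t = s0 ∨ t = y :=
        htwo s1 s0 y hs1S hadj10 hadj_s1y (Ne.symm hyne)
      have hnbrs_s0 : ∀ t, G.Adj s0 t → t = s1 ∨ t = w :=
        htwo s0 s1 w hs0S hadj10.symm hadj_s0w (Ne.symm hwne)
      have hnbrs_w : ∀ t, G.Adj w t → t = a ∨ t = s0 :=
        htwo w a s0 (Finset.mem_filter.mp hwSj).1 hadj_aw.symm hadj_s0w.symm (Ne.symm hs0a)
      have hnbrs_y : ∀ t, G.Adj y t → t = b ∨ t = s1 :=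
        htwo y b s1 (Finset.mem_filter.mp hySi).1 hadj_by.symm hadj_s1y.symm (Ne.symm hs1b)
      -- the pairing on the remaining vertices
      have hf' : ∀ u, u ∈ Sj → u ≠ s1 → u ≠ w →
          ∃ z, G.Adj u z ∧ z ∈ Si ∧ z ≠ s0 ∧ z ≠ y ∧ ∀ t, G.Adj u t → t = a ∨ t = z := by
        intro u hu h1 h2
        have huS : u ∈ S := (Finset.mem_filter.mp hu).1
        have hua : G.Adj u a := (hadj_aSj u hu h1).symm
        obtain ⟨z, hzne, hNz⟩ := nbrs_of_degree_two (hSdeg u huS) hua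
        have hz : G.Adj u z := by
          rw [← mem_neighborFinset, hNz]
          simp
        have hzSi : z ∈ Si := by
          by_cases hzb : z = b
          · exfalso
            subst hzb
            rcases hNb u hz.symm with h | h
            · exact haSj (h ▸ hu)
            · exact hSiSj u h hu
          have hzS : z ∈ S := hSmem z hzne hzb
          rcases hcases (C z) with h | h
          · exact Finset.mem_filter.mpr ⟨hzS, h⟩
          · exact absurd ((Finset.mem_filter.mp hu).2.trans h.symm) (hCval hz)
        refine ⟨z, hz, hzSi, ?_, ?_, htwo u a z huS hua hz (fun h => haSi (h ▸ hzSi))⟩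
        · rintro rfl
          rcases hnbrs_s0 u hz.symm with h | h
          · exact h1 h
          · exact h2 h
        · rintro rfl
          rcases hnbrs_y u hz.symm with h | h
          · exact hbSj (h ▸ hu)
          · exact h1 h
      choose! f hf1 hf2 hf3 hf4 hf5 using hf'
      have hg' : ∀ v, v ∈ Si → v ≠ s0 → v ≠ y →
          ∃ z, G.Adj v z ∧ z ∈ Sj ∧ z ≠ s1 ∧ z ≠ w ∧ ∀ t, G.Adj v t → t = b ∨ t = z := by
        intro v hv h1 h2
        have hvS : v ∈ S := (Finset.mem_filter.mp hv).1
        have hvb : G.Adj v b := (hadj_bSi v hv h1).symm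
        obtain ⟨z, hzne, hNz⟩ := nbrs_of_degree_two (hSdeg v hvS) hvb
        have hz : G.Adj v z := by
          rw [← mem_neighborFinset, hNz]
          simp
        have hzSj : z ∈ Sj := by
          by_cases hza : z = a
          · exfalso
            subst hza
            rcases hNa v hz.symm with h | h
            · exact hbSi (h ▸ hv)
            · exact hSiSj v hv h
          have hzS : z ∈ S := hSmem z hza hzne
          rcases hcases (C z) with h | h
          · exact absurd ((Finset.mem_filter.mp hv).2.trans h.symm) (hCval hz)
          · exact Finset.mem_filter.mpr ⟨hzS, h⟩
        refine ⟨z, hz, hzSj, ?_, ?_, htwo v b z hvS hvb hz (fun h => hbSj (h ▸ hzSj))⟩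
        · rintro rfl
          rcases hnbrs_s1 v hz.symm with h | h
          · exact h1 h
          · exact h2 h
        · rintro rfl
          rcases hnbrs_w v hz.symm with h | h
          · exact haSi (h ▸ hv)
          · exact h1 h
      choose! g hg1 hg2 hg3 hg4 hg5 using hg'
      have hgf : ∀ u, u ∈ Sj → u ≠ s1 → u ≠ w → g (f u) = u := by
        intro u hu h1 h2
        rcases hg5 (f u) (hf2 u hu h1 h2) (hf3 u hu h1 h2) (hf4 u hu h1 h2) u
          (hf1 u hu h1 h2).symm with h | h
        · exact absurd (h ▸ hu) hbSj
        · exact h.symm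
      have hfg : ∀ v, v ∈ Si → v ≠ s0 → v ≠ y → f (g v) = v := by
        intro v hv h1 h2
        rcases hf5 (g v) (hg2 v hv h1 h2) (hg3 v hv h1 h2) (hg4 v hv h1 h2) v
          (hg1 v hv h1 h2).symm with h | h
        · exact absurd (h ▸ hv) haSi
        · exact h.symm
      have hclass : ∀ v : V, v = a ∨ v = b ∨ v ∈ Sj ∨ v ∈ Si := by
        intro v
        by_cases h1 : v = a
        · exact Or.inl h1
        by_cases hvb : v = b
        · exact Or.inr (Or.inl hvb)
        have hvS := hSmem v h1 hvb
        rcases hcases (C v) with h | h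
        · exact Or.inr (Or.inr (Or.inr (Finset.mem_filter.mpr ⟨hvS, h⟩)))
        · exact Or.inr (Or.inr (Or.inl (Finset.mem_filter.mpr ⟨hvS, h⟩)))
      -- the graph with edge ab removed
      set G' := G.deleteEdges {s(a, b)} with hG'_def
      have hG'adj : ∀ x z, G.Adj x z → (x = a → z ≠ b) → (x = b → z ≠ a) → G'.Adj x z := by
        intro x z h h1 h2
        rw [hG'_def, deleteEdges_adj]
        refine ⟨h, fun hmem => ?_⟩
        simp only [Set.mem_singleton_iff, Sym2.eq_iff] at hmem
        rcases hmem with ⟨rfl, rfl⟩ | ⟨rfl, rfl⟩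
        · exact h1 rfl rfl
        · exact h2 rfl rfl
      -- the "long path" perfect matching
      set p5 : V → V := fun v =>
        if v = a then w else if v = w then a
        else if v = s1 then s0 else if v = s0 then s1
        else if v = b then y else if v = y then b
        else if v ∈ Sj then f v else g v with hp5_def
      have ev5a : p5 a = w := by
        rw [hp5_def]
        simp only [if_pos rfl, if_true]
      have ev5w : p5 w = a := by
        rw [hp5_def]
        simp only [if_neg hwa, if_pos rfl, if_true]
      have ev5s1 : p5 s1 = s0 := by
        rw [hp5_def]
        simp only [if_neg hs1a, if_neg (Ne.symm hwne), if_pos rfl, if_true]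
      have ev5s0 : p5 s0 = s1 := by
        rw [hp5_def]
        simp only [if_neg hs0a, if_neg (Ne.symm hws0), if_neg (Ne.symm hs1s0), if_pos rfl, if_true]
      have ev5b : p5 b = y := by
        rw [hp5_def]
        simp only [if_neg (Ne.symm hab_ne), if_neg (Ne.symm hwb), if_neg (Ne.symm hs1b),
          if_neg (Ne.symm hs0b), if_pos rfl, if_true]
      have ev5y : p5 y = b := by
        rw [hp5_def]
        simp only [if_neg hya, if_neg (Ne.symm hwy), if_neg (Ne.symm hs1y), if_neg hyne,
          if_neg hyb, if_pos rfl, if_true]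
      have ev5U : ∀ u, u ∈ Sj → u ≠ s1 → u ≠ w → p5 u = f u := by
        intro u hu h1 h2
        have hua : u ≠ a := fun h => haSj (h ▸ hu)
        have hub : u ≠ b := fun h => hbSj (h ▸ hu)
        have hus0 : u ≠ s0 := fun h => hSiSj u (by rw [h]; exact hs0Si) hu
        have huy : u ≠ y := fun h => hSiSj u (by rw [h]; exact hySi) hu
        rw [hp5_def]
        simp only [if_neg hua, if_neg h2, if_neg h1, if_neg hus0, if_neg hub, if_neg huy,
          if_pos hu, if_true]
      have ev5W : ∀ v, v ∈ Si → v ≠ s0 → v ≠ y → p5 v = g v := by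
        intro v hv h1 h2
        have hva : v ≠ a := fun h => haSi (h ▸ hv)
        have hvb : v ≠ b := fun h => hbSi (h ▸ hv)
        have hvw : v ≠ w := fun h => hSiSj v hv (by rw [h]; exact hwSj)
        have hvs1 : v ≠ s1 := fun h => hSiSj v hv (by rw [h]; exact hs1Sj)
        have hvSj : v ∉ Sj := fun h => hSiSj v hv h
        rw [hp5_def]
        simp only [if_neg hva, if_neg hvw, if_neg hvs1, if_neg h1, if_neg hvb, if_neg h2,
          if_neg hvSj]
      have hinv5 : ∀ v, p5 (p5 v) = v := by
        intro v
        rcases hclass v with rfl | rfl | hv | hv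
        · rw [ev5a, ev5w]
        · rw [ev5b, ev5y]
        · by_cases h1 : v = s1
          · subst h1
            rw [ev5s1, ev5s0]
          by_cases h2 : v = w
          · subst h2
            rw [ev5w, ev5a]
          · rw [ev5U v hv h1 h2, ev5W (f v) (hf2 v hv h1 h2) (hf3 v hv h1 h2) (hf4 v hv h1 h2),
              hgf v hv h1 h2]
        · by_cases h1 : v = s0
          · subst h1
            rw [ev5s0, ev5s1]
          by_cases h2 : v = y
          · subst h2
            rw [ev5y, ev5b]
          · rw [ev5W v hv h1 h2, ev5U (g v) (hg2 v hv h1 h2) (hg3 v hv h1 h2) (hg4 v hv h1 h2),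
              hfg v hv h1 h2]
      have hadj5 : ∀ v, G'.Adj v (p5 v) := by
        intro v
        rcases hclass v with h0 | h0 | hv | hv
        · rw [h0, ev5a]
          exact hG'adj a w hadj_aw (fun _ => hwb) (fun h => absurd h hab_ne)
        · rw [h0, ev5b]
          exact hG'adj b y hadj_by (fun h => absurd h (Ne.symm hab_ne)) (fun _ => hya)
        · by_cases h1 : v = s1
          · rw [h1, ev5s1]
            exact hG'adj s1 s0 hadj10 (fun h => absurd h hs1a) (fun h => absurd h hs1b)
          by_cases h2 : v = w
          · rw [h2, ev5w]
            exact hG'adj w a hadj_aw.symm (fun h => absurd h hwa) (fun h => absurd h hwb)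
          · rw [ev5U v hv h1 h2]
            exact hG'adj v (f v) (hf1 v hv h1 h2) (fun h => absurd h (fun hh => haSj (hh ▸ hv)))
              (fun h => absurd h (fun hh => hbSj (hh ▸ hv)))
        · by_cases h1 : v = s0
          · rw [h1, ev5s0]
            exact hG'adj s0 s1 hadj10.symm (fun h => absurd h hs0a) (fun h => absurd h hs0b)
          by_cases h2 : v = y
          · rw [h2, ev5y]
            exact hG'adj y b hadj_by.symm (fun h => absurd h hya) (fun h => absurd h hyb)
          · rw [ev5W v hv h1 h2]
            exact hG'adj v (g v) (hg1 v hv h1 h2) (fun h => absurd h (fun hh => haSi (hh ▸ hv)))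
              (fun h => absurd h (fun hh => hbSi (hh ▸ hv)))
      obtain ⟨M5, hM5pm, hM5adj⟩ := pm_of_involution p5 hinv5 hadj5
      -- perfect matchings using a-u for u in Sj \ {s1, w}
      have hMu : ∀ u0, u0 ∈ Sj → u0 ≠ s1 → u0 ≠ w →
          ∃ M : G'.Subgraph, M.IsPerfectMatching ∧
            M.Adj a u0 ∧ M.Adj b (f u0) ∧ M.Adj w s0 ∧ M.Adj s1 y := by
        intro u0 hu0 hu1 hu2
        have hu0a : u0 ≠ a := fun h => haSj (h ▸ hu0)
        have hu0b : u0 ≠ b := fun h => hbSj (h ▸ hu0)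
        have hu0s0 : u0 ≠ s0 := fun h => hSiSj u0 (by rw [h]; exact hs0Si) hu0
        have hu0y : u0 ≠ y := fun h => hSiSj u0 (by rw [h]; exact hySi) hu0
        have hz0Si : f u0 ∈ Si := hf2 u0 hu0 hu1 hu2
        have hz0s0 : f u0 ≠ s0 := hf3 u0 hu0 hu1 hu2
        have hz0y : f u0 ≠ y := hf4 u0 hu0 hu1 hu2
        have hz0a : f u0 ≠ a := fun h => haSi (h ▸ hz0Si)
        have hz0b : f u0 ≠ b := fun h => hbSi (h ▸ hz0Si)
        have hz0u0 : f u0 ≠ u0 := fun h => hSiSj u0 (by rw [← h]; exact hz0Si) hu0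
        have hz0w : f u0 ≠ w := fun h => hSiSj (f u0) hz0Si (by rw [h]; exact hwSj)
        have hz0s1 : f u0 ≠ s1 := fun h => hSiSj (f u0) hz0Si (by rw [h]; exact hs1Sj)
        set p : V → V := fun v =>
          if v = a then u0 else if v = u0 then a
          else if v = b then f u0 else if v = f u0 then b
          else if v = w then s0 else if v = s0 then w
          else if v = s1 then y else if v = y then s1
          else if v ∈ Sj then f v else g v with hp_def
        have eva : p a = u0 := by
          rw [hp_def]
          simp only [if_pos rfl, if_true]
        have evu0 : p u0 = a := by
          rw [hp_def]
          simp only [if_neg hu0a, if_pos rfl, if_true]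
        have evb : p b = f u0 := by
          rw [hp_def]
          simp only [if_neg (Ne.symm hab_ne), if_neg (Ne.symm hu0b), if_pos rfl, if_true]
        have evz0 : p (f u0) = b := by
          rw [hp_def]
          simp only [if_neg hz0a, if_neg hz0u0, if_neg hz0b, if_pos rfl, if_true]
        have evw : p w = s0 := by
          rw [hp_def]
          simp only [if_neg hwa, if_neg (fun h => hu2 h.symm : ¬ w = u0), if_neg hwb,
            if_neg (Ne.symm hz0w), if_pos rfl, if_true]
        have evs0 : p s0 = w := by
          rw [hp_def]
          simp only [if_neg hs0a, if_neg (Ne.symm hu0s0), if_neg hs0b, if_neg (Ne.symm hz0s0),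
            if_neg (Ne.symm hws0), if_pos rfl, if_true]
        have evs1 : p s1 = y := by
          rw [hp_def]
          simp only [if_neg hs1a, if_neg (Ne.symm hu1), if_neg hs1b, if_neg (Ne.symm hz0s1),
            if_neg (Ne.symm hwne), if_neg hs1s0, if_pos rfl, if_true]
        have evy : p y = s1 := by
          rw [hp_def]
          simp only [if_neg hya, if_neg (Ne.symm hu0y), if_neg hyb, if_neg (Ne.symm hz0y),
            if_neg (Ne.symm hwy), if_neg hyne, if_neg (Ne.symm hs1y), if_pos rfl, if_true]
        have evU : ∀ u, u ∈ Sj → u ≠ s1 → u ≠ w → u ≠ u0 → p u = f u := by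
          intro u hu h1 h2 h3
          have hua : u ≠ a := fun h => haSj (h ▸ hu)
          have hub : u ≠ b := fun h => hbSj (h ▸ hu)
          have hus0 : u ≠ s0 := fun h => hSiSj u (by rw [h]; exact hs0Si) hu
          have huy : u ≠ y := fun h => hSiSj u (by rw [h]; exact hySi) hu
          have huz0 : u ≠ f u0 := fun h => hSiSj u (by rw [h]; exact hz0Si) hu
          rw [hp_def]
          simp only [if_neg hua, if_neg h3, if_neg hub, if_neg huz0, if_neg h2, if_neg hus0,
            if_neg h1, if_neg huy, if_pos hu, if_true]
        have evW : ∀ v, v ∈ Si → v ≠ s0 → v ≠ y → v ≠ f u0 → p v = g v := by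
          intro v hv h1 h2 h3
          have hva : v ≠ a := fun h => haSi (h ▸ hv)
          have hvb : v ≠ b := fun h => hbSi (h ▸ hv)
          have hvu0 : v ≠ u0 := fun h => hSiSj v hv (by rw [h]; exact hu0)
          have hvw : v ≠ w := fun h => hSiSj v hv (by rw [h]; exact hwSj)
          have hvs1 : v ≠ s1 := fun h => hSiSj v hv (by rw [h]; exact hs1Sj)
          have hvSj : v ∉ Sj := fun h => hSiSj v hv h
          rw [hp_def]
          simp only [if_neg hva, if_neg hvu0, if_neg hvb, if_neg h3, if_neg hvw, if_neg h1,
            if_neg hvs1, if_neg h2, if_neg hvSj]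
        have hinvp : ∀ v, p (p v) = v := by
          intro v
          rcases hclass v with rfl | rfl | hv | hv
          · rw [eva, evu0]
          · rw [evb, evz0]
          · by_cases h1 : v = s1
            · subst h1
              rw [evs1, evy]
            by_cases h2 : v = w
            · subst h2
              rw [evw, evs0]
            by_cases h3 : v = u0
            · subst h3
              rw [evu0, eva]
            · rw [evU v hv h1 h2 h3]
              have hfvz0 : f v ≠ f u0 := by
                intro h
                apply h3
                rw [← hgf v hv h1 h2, h, hgf u0 hu0 hu1 hu2]
              rw [evW (f v) (hf2 v hv h1 h2) (hf3 v hv h1 h2) (hf4 v hv h1 h2) hfvz0,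
                hgf v hv h1 h2]
          · by_cases h1 : v = s0
            · subst h1
              rw [evs0, evw]
            by_cases h2 : v = y
            · subst h2
              rw [evy, evs1]
            by_cases h3 : v = f u0
            · subst h3
              rw [evz0, evb]
            · rw [evW v hv h1 h2 h3]
              have hgvu0 : g v ≠ u0 := by
                intro h
                apply h3
                rw [← hfg v hv h1 h2, h]
              rw [evU (g v) (hg2 v hv h1 h2) (hg3 v hv h1 h2) (hg4 v hv h1 h2) hgvu0,
                hfg v hv h1 h2]
        have hadjp : ∀ v, G'.Adj v (p v) := by
          intro v
          rcases hclass v with h0 | h0 | hv | hv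
          · rw [h0, eva]
            exact hG'adj a u0 (hadj_aSj u0 hu0 hu1) (fun _ => hu0b) (fun h => absurd h hab_ne)
          · rw [h0, evb]
            exact hG'adj b (f u0) (hadj_bSi (f u0) hz0Si hz0s0)
              (fun h => absurd h (Ne.symm hab_ne)) (fun _ => hz0a)
          · by_cases h1 : v = s1
            · rw [h1, evs1]
              exact hG'adj s1 y hadj_s1y (fun h => absurd h hs1a) (fun h => absurd h hs1b)
            by_cases h2 : v = w
            · rw [h2, evw]
              exact hG'adj w s0 hadj_s0w.symm (fun h => absurd h hwa) (fun h => absurd h hwb)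
            by_cases h3 : v = u0
            · rw [h3, evu0]
              exact hG'adj u0 a (hadj_aSj u0 hu0 hu1).symm (fun h => absurd h hu0a)
                (fun h => absurd h hu0b)
            · rw [evU v hv h1 h2 h3]
              exact hG'adj v (f v) (hf1 v hv h1 h2) (fun h => absurd h (fun hh => haSj (hh ▸ hv)))
                (fun h => absurd h (fun hh => hbSj (hh ▸ hv)))
          · by_cases h1 : v = s0
            · rw [h1, evs0]
              exact hG'adj s0 w hadj_s0w (fun h => absurd h hs0a) (fun h => absurd h hs0b)
            by_cases h2 : v = y
            · rw [h2, evy]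
              exact hG'adj y s1 hadj_s1y.symm (fun h => absurd h hya) (fun h => absurd h hyb)
            by_cases h3 : v = f u0
            · rw [h3, evz0]
              exact hG'adj (f u0) b (hadj_bSi (f u0) hz0Si hz0s0).symm
                (fun h => absurd h hz0a) (fun h => absurd h hz0b)
            · rw [evW v hv h1 h2 h3]
              exact hG'adj v (g v) (hg1 v hv h1 h2) (fun h => absurd h (fun hh => haSi (hh ▸ hv)))
                (fun h => absurd h (fun hh => hbSi (hh ▸ hv)))
        obtain ⟨M, hMpm, hMadj⟩ := pm_of_involution p hinvp hadjp
        refine ⟨M, hMpm, ?_, ?_, ?_, ?_⟩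
        · have h := hMadj a
          rwa [eva] at h
        · have h := hMadj b
          rwa [evb] at h
        · have h := hMadj w
          rwa [evw] at h
        · have h := hMadj s1
          rwa [evs1] at h
      -- there is at least one extra path
      obtain ⟨u0, hu0Sj, hu0ne⟩ : ∃ u0 ∈ Sj, u0 ≠ s1 ∧ u0 ≠ w := by
        have hnotsub : ¬ Sj ⊆ ({s1, w} : Finset V) := by
          intro hsub
          have h1 := Finset.card_le_card hsub
          have h2 : #({s1, w} : Finset V) ≤ 2 := Finset.card_insert_le _ _ |>.trans (by simp)
          omega
        obtain ⟨u0, hu0, hnot⟩ := Finset.not_subset.mp hnotsub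
        simp only [Finset.mem_insert, Finset.mem_singleton, not_or] at hnot
        exact ⟨u0, hu0, hnot⟩
      obtain ⟨Mu0, hMu0pm, hMu0a, hMu0b, hMu0w, hMu0s1⟩ := hMu u0 hu0Sj hu0ne.1 hu0ne.2
      -- every edge of G' is in a perfect matching of G'
      have hclaim : ∀ x z, G'.Adj x z → ∃ M : G'.Subgraph, M.IsPerfectMatching ∧ M.Adj x z := by
        intro x z hxz
        have hxzG : G.Adj x z := by
          rw [hG'_def, deleteEdges_adj] at hxz
          exact hxz.1
        have hxz_ne1 : ¬(x = a ∧ z = b) := by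
          rintro ⟨rfl, rfl⟩
          rw [hG'_def, deleteEdges_adj] at hxz
          exact hxz.2 rfl
        have hxz_ne2 : ¬(x = b ∧ z = a) := by
          rintro ⟨rfl, rfl⟩
          rw [hG'_def, deleteEdges_adj] at hxz
          exact hxz.2 (Sym2.eq_swap)
        rcases hclass x with hxa | hxb | hx | hx
        · -- x = a
          rcases hNa z (by rw [← hxa]; exact hxzG) with hzb | hzSj
          · exact absurd ⟨hxa, hzb⟩ hxz_ne1
          have hzs1 : z ≠ s1 := by
            rintro rfl
            exact hs1na (by rw [← hxa]; exact hxzG)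
          by_cases hzw : z = w
          · refine ⟨M5, hM5pm, ?_⟩
            have h := hM5adj a
            rw [ev5a] at h
            rwa [← hxa, ← hzw] at h
          · obtain ⟨M, hMpm, hMa, -, -, -⟩ := hMu z hzSj hzs1 hzw
            rw [← hxa] at hMa
            exact ⟨M, hMpm, hMa⟩
        · -- x = b
          rcases hNb z (by rw [← hxb]; exact hxzG) with hza | hzSi
          · exact absurd ⟨hxb, hza⟩ hxz_ne2
          have hzs0 : z ≠ s0 := by
            rintro rfl
            exact hs0nb (by rw [← hxb]; exact hxzG)
          by_cases hzy : z = y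
          · refine ⟨M5, hM5pm, ?_⟩
            have h := hM5adj b
            rw [ev5b] at h
            rwa [← hxb, ← hzy] at h
          · obtain ⟨M, hMpm, -, hMb, -, -⟩ := hMu (g z) (hg2 z hzSi hzs0 hzy)
              (hg3 z hzSi hzs0 hzy) (hg4 z hzSi hzs0 hzy)
            rw [hfg z hzSi hzs0 hzy] at hMb
            rw [← hxb] at hMb
            exact ⟨M, hMpm, hMb⟩
        · -- x ∈ Sj
          by_cases h1 : x = s1
          · rcases hnbrs_s1 z (by rw [← h1]; exact hxzG) with hz | hz
            · refine ⟨M5, hM5pm, ?_⟩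
              have h := hM5adj s1
              rw [ev5s1] at h
              rwa [← h1, ← hz] at h
            · refine ⟨Mu0, hMu0pm, ?_⟩
              rwa [← h1, ← hz] at hMu0s1
          by_cases h2 : x = w
          · rcases hnbrs_w z (by rw [← h2]; exact hxzG) with hz | hz
            · refine ⟨M5, hM5pm, ?_⟩
              have h := hM5adj w
              rw [ev5w] at h
              rwa [← h2, ← hz] at h
            · refine ⟨Mu0, hMu0pm, ?_⟩
              rwa [← h2, ← hz] at hMu0w
          · rcases hf5 x hx h1 h2 z hxzG with hz | hz
            · obtain ⟨M, hMpm, hMa, -, -, -⟩ := hMu x hx h1 h2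
              refine ⟨M, hMpm, ?_⟩
              rw [← hz] at hMa
              exact hMa.symm
            · refine ⟨M5, hM5pm, ?_⟩
              have h := hM5adj x
              rwa [ev5U x hx h1 h2, ← hz] at h
        · -- x ∈ Si
          by_cases h1 : x = s0
          · rcases hnbrs_s0 z (by rw [← h1]; exact hxzG) with hz | hz
            · refine ⟨M5, hM5pm, ?_⟩
              have h := hM5adj s0
              rw [ev5s0] at h
              rwa [← h1, ← hz] at h
            · refine ⟨Mu0, hMu0pm, ?_⟩
              have h := hMu0w.symm
              rwa [← h1, ← hz] at h
          by_cases h2 : x = y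
          · rcases hnbrs_y z (by rw [← h2]; exact hxzG) with hz | hz
            · refine ⟨M5, hM5pm, ?_⟩
              have h := hM5adj y
              rw [ev5y] at h
              rwa [← h2, ← hz] at h
            · refine ⟨Mu0, hMu0pm, ?_⟩
              have h := hMu0s1.symm
              rwa [← h2, ← hz] at h
          · rcases hg5 x hx h1 h2 z hxzG with hz | hz
            · obtain ⟨M, hMpm, -, hMb, -, -⟩ := hMu (g x) (hg2 x hx h1 h2) (hg3 x hx h1 h2)
                (hg4 x hx h1 h2)
              rw [hfg x hx h1 h2] at hMb
              refine ⟨M, hMpm, ?_⟩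
              rw [← hz] at hMb
              exact hMb.symm
            · refine ⟨M5, hM5pm, ?_⟩
              have h := hM5adj x
              rwa [ev5W x hx h1 h2, ← hz] at h
      -- G' is connected
      have hreach : ∀ v, G'.Reachable v b := by
        have hyb' : G'.Adj y b := hG'adj y b hadj_by.symm (fun h => absurd h hya)
          (fun _ => Ne.symm hab_ne)
        have hs1r : G'.Reachable s1 b :=
          (hG'adj s1 y hadj_s1y (fun h => absurd h hs1a) (fun h => absurd h hs1b)).reachable.trans
            hyb'.reachable
        have hs0r : G'.Reachable s0 b :=
          (hG'adj s0 s1 hadj10.symm (fun h => absurd h hs0a)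
            (fun h => absurd h hs0b)).reachable.trans hs1r
        have hwr : G'.Reachable w b :=
          (hG'adj w s0 hadj_s0w.symm (fun h => absurd h hwa)
            (fun h => absurd h hwb)).reachable.trans hs0r
        have har : G'.Reachable a b :=
          (hG'adj a w hadj_aw (fun _ => hwb) (fun h => absurd h hab_ne)).reachable.trans hwr
        intro v
        rcases hclass v with h0 | h0 | hv | hv
        · rw [h0]
          exact har
        · rw [h0]
        · by_cases h1 : v = s1
          · rw [h1]
            exact hs1r
          by_cases h2 : v = w
          · rw [h2]
            exact hwr
          · refine (hG'adj v (f v) (hf1 v hv h1 h2)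
              (fun h => absurd h (fun hh => haSj (hh ▸ hv)))
              (fun h => absurd h (fun hh => hbSj (hh ▸ hv)))).reachable.trans ?_
            have hfvSi := hf2 v hv h1 h2
            exact (hG'adj (f v) b (hadj_bSi (f v) hfvSi (hf3 v hv h1 h2)).symm
              (fun h => absurd h (fun hh => haSi (hh ▸ hfvSi)))
              (fun h => absurd h (fun hh => hbSi (hh ▸ hfvSi)))).reachable
        · by_cases h1 : v = s0
          · rw [h1]
            exact hs0r
          by_cases h2 : v = y
          · rw [h2]
            exact hyb'.reachable
          · exact (hG'adj v b (hadj_bSi v hv h1).symm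
              (fun h => absurd h (fun hh => haSi (hh ▸ hv)))
              (fun h => absurd h (fun hh => hbSi (hh ▸ hv)))).reachable
      have hconn' : G'.Connected := by
        rw [connected_iff]
        exact ⟨fun x z => (hreach x).trans (hreach z).symm, ⟨b⟩⟩
      -- contradiction with minimality
      refine hminE s(a, b) hab ⟨hconn', hcard4, ?_⟩
      intro e he
      induction e with
      | _ x z =>
        obtain ⟨M, hMpm, hMxz⟩ := hclaim x z (by rwa [mem_edgeSet] at he)
        refine ⟨M, hMpm, ?_⟩
        rw [Subgraph.mem_edgeSet]
        exact hMxz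
  · -- hub vertices not adjacent: build the isomorphism
    have hNaSj : G.neighborFinset a = Sj := by
      refine Finset.eq_of_subset_of_card_le ?_ ?_
      · intro v hv
        rw [mem_neighborFinset] at hv
        rcases hNa v hv with rfl | h
        · exact absurd hv hab
        · exact h
      · rw [card_neighborFinset_eq_degree, hSj_k]
    have hNbSi : G.neighborFinset b = Si := by
      refine Finset.eq_of_subset_of_card_le ?_ ?_
      · intro v hv
        rw [mem_neighborFinset] at hv
        rcases hNb v hv with rfl | h
        · exact absurd hv.symm hab
        · exact h
      · rw [card_neighborFinset_eq_degree, hSi_k, hdb]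
    have hAdj_a : ∀ v, G.Adj a v ↔ v ∈ Sj := fun v => by rw [← mem_neighborFinset, hNaSj]
    have hAdj_b : ∀ v, G.Adj b v ↔ v ∈ Si := fun v => by rw [← mem_neighborFinset, hNbSi]
    have hf' : ∀ s, s ∈ Sj → ∃ y, G.Adj s y ∧ y ∈ Si ∧ ∀ z, G.Adj s z → z = a ∨ z = y := by
      intro s hs
      have hsS : s ∈ S := (Finset.mem_filter.mp hs).1
      have hsa : G.Adj s a := ((hAdj_a s).mpr hs).symm
      obtain ⟨y, hyne, hy⟩ := nbrs_of_degree_two (hSdeg s hsS) hsa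
      have hyadj : G.Adj s y := by
        rw [← mem_neighborFinset, hy]
        simp
      refine ⟨y, hyadj, ?_, ?_⟩
      · have hyb : y ≠ b := by
          rintro rfl
          exact hSiSj s ((hAdj_b s).mp hyadj.symm) hs
        have hyS : y ∈ S := hSmem y hyne hyb
        have hcy : C y = C a := by
          rcases hcases (C y) with h | h
          · exact h
          · exact absurd (((Finset.mem_filter.mp hs).2).trans h.symm) (hCval hyadj)
        exact Finset.mem_filter.mpr ⟨hyS, hcy⟩
      · intro z hz
        have hzm : z ∈ G.neighborFinset s := by rw [mem_neighborFinset]; exact hz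
        rw [hy] at hzm
        rcases Finset.mem_insert.mp hzm with h | h
        · exact Or.inl h
        · exact Or.inr (Finset.mem_singleton.mp h)
    choose! f hf1 hf2 hf3 using hf'
    have hg' : ∀ v, v ∈ Si → ∃ u, G.Adj v u ∧ u ∈ Sj ∧ ∀ z, G.Adj v z → z = b ∨ z = u := by
      intro v hv
      have hvS : v ∈ S := (Finset.mem_filter.mp hv).1
      have hvb : G.Adj v b := ((hAdj_b v).mpr hv).symm
      obtain ⟨u, hune, hu⟩ := nbrs_of_degree_two (hSdeg v hvS) hvb
      have huadj : G.Adj v u := by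
        rw [← mem_neighborFinset, hu]
        simp
      refine ⟨u, huadj, ?_, ?_⟩
      · have hua : u ≠ a := by
          rintro rfl
          exact hSiSj v hv ((hAdj_a v).mp huadj.symm)
        have huS : u ∈ S := hSmem u hua hune
        have hcu : C u = C b := by
          rcases hcases (C u) with h | h
          · exact absurd (((Finset.mem_filter.mp hv).2).trans h.symm) (hCval huadj)
          · exact h
        exact Finset.mem_filter.mpr ⟨huS, hcu⟩
      · intro z hz
        have hzm : z ∈ G.neighborFinset v := by rw [mem_neighborFinset]; exact hz
        rw [hu] at hzm
        rcases Finset.mem_insert.mp hzm with h | h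
        · exact Or.inl h
        · exact Or.inr (Finset.mem_singleton.mp h)
    choose! g hg1 hg2 hg3 using hg'
    have hgf : ∀ s ∈ Sj, g (f s) = s := by
      intro s hs
      rcases hg3 (f s) (hf2 s hs) s (hf1 s hs).symm with rfl | h
      · exact absurd hs hbSj
      · exact h.symm
    have hfg : ∀ v ∈ Si, f (g v) = v := by
      intro v hv
      rcases hf3 (g v) (hg2 v hv) v (hg1 v hv).symm with rfl | h
      · exact absurd hv haSi
      · exact h.symm
    set k := G.degree a with hk_def
    have hk3 : 3 ≤ k := haT
    have hcardSj : Fintype.card ↥(Sj : Finset V) = k := by rw [Fintype.card_coe, hSj_k]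
    set e1 : ↥(Sj : Finset V) ≃ Fin k := Fintype.equivFinOfCardEq hcardSj with he1_def
    set φ : V → (Option (Fin k)) ⊕ (Option (Fin k)) := fun v =>
      if v = a then Sum.inl none
      else if v = b then Sum.inr none
      else if h : v ∈ Sj then Sum.inl (some (e1 ⟨v, h⟩))
      else if h : v ∈ Si then Sum.inr (some (e1 ⟨g v, hg2 v h⟩))
      else Sum.inl none with hφ_def
    have evala : φ a = Sum.inl none := by simp [hφ_def]
    have evalb : φ b = Sum.inr none := by simp [hφ_def, Ne.symm hab_ne]
    have evalSj : ∀ s (hs : s ∈ Sj), φ s = Sum.inl (some (e1 ⟨s, hs⟩)) := by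
      intro s hs
      have h1 : s ≠ a := fun h => haSj (h ▸ hs)
      have h2 : s ≠ b := fun h => hbSj (h ▸ hs)
      rw [hφ_def]
      simp only [if_neg h1, if_neg h2, dif_pos hs]
    have evalSi : ∀ v (hv : v ∈ Si), φ v = Sum.inr (some (e1 ⟨g v, hg2 v hv⟩)) := by
      intro v hv
      have h1 : v ≠ a := fun h => haSi (h ▸ hv)
      have h2 : v ≠ b := fun h => hbSi (h ▸ hv)
      have h3 : v ∉ Sj := fun h => hSiSj v hv h
      rw [hφ_def]
      simp only [if_neg h1, if_neg h2, dif_neg h3, dif_pos hv]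
    have hclass : ∀ v : V, v = a ∨ v = b ∨ v ∈ Sj ∨ v ∈ Si := by
      intro v
      by_cases h1 : v = a
      · exact Or.inl h1
      by_cases hvb : v = b
      · exact Or.inr (Or.inl hvb)
      have hvS := hSmem v h1 hvb
      rcases hcases (C v) with h | h
      · exact Or.inr (Or.inr (Or.inr (Finset.mem_filter.mpr ⟨hvS, h⟩)))
      · exact Or.inr (Or.inr (Or.inl (Finset.mem_filter.mpr ⟨hvS, h⟩)))
    have hginj : ∀ v w, v ∈ Si → w ∈ Si → g v = g w → v = w := by
      intro v w hv hw h
      rw [← hfg v hv, ← hfg w hw, h]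
    have hinj : Function.Injective φ := by
      intro x y hxy
      rcases hclass x with rfl | rfl | hx | hx <;> rcases hclass y with rfl | rfl | hy | hy
      · rfl
      · rw [evala, evalb] at hxy; exact absurd hxy (by simp)
      · rw [evala, evalSj y hy] at hxy; exact absurd hxy (by simp)
      · rw [evala, evalSi y hy] at hxy; exact absurd hxy (by simp)
      · rw [evalb, evala] at hxy; exact absurd hxy (by simp)
      · rfl
      · rw [evalb, evalSj y hy] at hxy; exact absurd hxy (by simp)
      · rw [evalb, evalSi y hy] at hxy; exact absurd hxy (by simp)
      · rw [evalSj x hx, evala] at hxy; exact absurd hxy (by simp)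
      · rw [evalSj x hx, evalb] at hxy; exact absurd hxy (by simp)
      · rw [evalSj x hx, evalSj y hy] at hxy
        simp only [Sum.inl.injEq, Option.some.injEq] at hxy
        exact congrArg Subtype.val (e1.injective hxy)
      · rw [evalSj x hx, evalSi y hy] at hxy; exact absurd hxy (by simp)
      · rw [evalSi x hx, evala] at hxy; exact absurd hxy (by simp)
      · rw [evalSi x hx, evalb] at hxy; exact absurd hxy (by simp)
      · rw [evalSi x hx, evalSj y hy] at hxy; exact absurd hxy (by simp)
      · rw [evalSi x hx, evalSi y hy] at hxy
        simp only [Sum.inr.injEq, Option.some.injEq] at hxy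
        exact hginj x y hx hy (congrArg Subtype.val (e1.injective hxy))
    have hcardeq : Fintype.card V = Fintype.card ((Option (Fin k)) ⊕ (Option (Fin k))) := by
      simp only [Fintype.card_sum, Fintype.card_option, Fintype.card_fin]
      omega
    have hbij : Function.Bijective φ :=
      (Fintype.bijective_iff_injective_and_card φ).mpr ⟨hinj, hcardeq⟩
    have hAdjSjSi : ∀ s v, s ∈ Sj → v ∈ Si → (G.Adj s v ↔ v = f s) := by
      intro s v hs hv
      constructor
      · intro h
        rcases hf3 s hs v h with rfl | h2
        · exact absurd hv haSi
        · exact h2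
      · rintro rfl
        exact hf1 s hs
    have hAdjSjSj : ∀ s s', s ∈ Sj → s' ∈ Sj → ¬G.Adj s s' := by
      intro s s' hs hs' h
      exact hCval h ((Finset.mem_filter.mp hs).2.trans (Finset.mem_filter.mp hs').2.symm)
    have hAdjSiSi : ∀ s s', s ∈ Si → s' ∈ Si → ¬G.Adj s s' := by
      intro s s' hs hs' h
      exact hCval h ((Finset.mem_filter.mp hs).2.trans (Finset.mem_filter.mp hs').2.symm)
    refine ⟨k, hk3, ⟨⟨Equiv.ofBijective φ hbij, @fun x y => ?_⟩⟩⟩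
    show (leafMatching (starGraphK k)).Adj (φ x) (φ y) ↔ G.Adj x y
    rcases hclass x with rfl | rfl | hx | hx <;> rcases hclass y with rfl | rfl | hy | hy
    · rw [evala]
      constructor
      · rintro ⟨h, -⟩
        exact absurd rfl h
      · intro h
        exact absurd h (G.loopless.irrefl _)
    · rw [evala, evalb]
      constructor
      · rintro ⟨-, h⟩
        exact absurd h (starGraphK_degN_none (by omega))
      · intro h
        exact absurd h hab
    · rw [evala, evalSj y hy]
      constructor
      · intro _
        exact (hAdj_a y).mpr hy
      · intro _
        exact ⟨by simp, Or.inl rfl⟩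
    · rw [evala, evalSi y hy]
      constructor
      · rintro ⟨h, -⟩
        exact absurd h (by simp)
      · intro h
        exact absurd ((hAdj_a y).mp h) (hSiSj y hy)
    · rw [evalb, evala]
      constructor
      · rintro ⟨-, h⟩
        exact absurd h (starGraphK_degN_none (by omega))
      · intro h
        exact absurd h.symm hab
    · rw [evalb]
      constructor
      · rintro ⟨h, -⟩
        exact absurd rfl h
      · intro h
        exact absurd h (G.loopless.irrefl _)
    · rw [evalb, evalSj y hy]
      constructor
      · rintro ⟨h, -⟩
        exact absurd h (by simp)
      · intro h
        exact absurd ((hAdj_b y).mp h) (fun hh => hSiSj y hh hy)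
    · rw [evalb, evalSi y hy]
      constructor
      · intro _
        exact (hAdj_b y).mpr hy
      · intro _
        exact ⟨by simp, Or.inl rfl⟩
    · rw [evalSj x hx, evala]
      constructor
      · intro _
        exact ((hAdj_a x).mpr hx).symm
      · intro _
        exact ⟨by simp, Or.inr rfl⟩
    · rw [evalSj x hx, evalb]
      constructor
      · rintro ⟨h, -⟩
        exact absurd h (by simp)
      · intro h
        exact absurd ((hAdj_b x).mp h.symm) (fun hh => hSiSj x hh hx)
    · rw [evalSj x hx, evalSj y hy]
      constructor
      · rintro ⟨-, h | h⟩ <;> exact absurd h (by simp)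
      · intro h
        exact absurd h (hAdjSjSj x y hx hy)
    · rw [evalSj x hx, evalSi y hy]
      constructor
      · rintro ⟨h, -⟩
        simp only [Option.some.injEq] at h
        have h2 : x = g y := congrArg Subtype.val (e1.injective h)
        rw [hAdjSjSi x y hx hy, h2, hfg y hy]
      · intro h
        have h2 : y = f x := (hAdjSjSi x y hx hy).mp h
        have h3 : g y = x := by rw [h2, hgf x hx]
        exact ⟨congrArg (fun t => some (e1 t)) (Subtype.ext h3.symm), starGraphK_degN_some _⟩
    · rw [evalSi x hx, evala]
      constructor
      · rintro ⟨h, -⟩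
        exact absurd h (by simp)
      · intro h
        exact absurd ((hAdj_a x).mp h.symm) (hSiSj x hx)
    · rw [evalSi x hx, evalb]
      constructor
      · intro _
        exact ((hAdj_b x).mpr hx).symm
      · intro _
        exact ⟨by simp, Or.inr rfl⟩
    · rw [evalSi x hx, evalSj y hy]
      constructor
      · rintro ⟨h, -⟩
        simp only [Option.some.injEq] at h
        have h2 : g x = y := congrArg Subtype.val (e1.injective h)
        have h4 : x = f y := by rw [← h2, hfg x hx]
        exact ((hAdjSjSi y x hy hx).mpr h4).symm
      · intro h
        have h2 : x = f y := (hAdjSjSi y x hy hx).mp h.symm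
        have h3 : g x = y := by rw [h2, hgf y hy]
        exact ⟨congrArg (fun t => some (e1 t)) (Subtype.ext h3), starGraphK_degN_some _⟩
    · rw [evalSi x hx, evalSi y hy]
      constructor
      · rintro ⟨-, h | h⟩ <;> exact absurd h (by simp)
      · intro h
        exact absurd h (hAdjSiSi x y hx hy)
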